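/- arXiv:2406.08939 — 3 statements merged into one kernel-verified Lean document; each statement's English description precedes it below -/
import Mathlib

section
/- Let χ be a primitive Dirichlet character modulo p^n of p-power order. Since 2(n−n₀) ≥ n, the map b ↦ χ(1 + p^{n−n₀} b) is a well-defined homomorphism from (ℤ/p^{n₀}ℤ, +) to ℂ^×, and there exists a unique element c_χ ∈ ℤ/p^{n₀}ℤ such that χ(1 + p^{n−n₀} b) = e(b·c_χ/p^{n₀}) for all integers b; moreover, because χ is primitive, c_χ is a unit in ℤ/p^{n₀}ℤ. -/
open Complex

/-- `e x = exp(2πi x)` for a rational number `x`. -/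
noncomputable def e (x : ℚ) : ℂ := Complex.exp (2 * Real.pi * Complex.I * x)

/-- for a primitive Dirichlet character `χ` modulo `p^n` of `p`-power order
(`p` odd, `n ≥ 2n₀`), the map `b ↦ χ(1 + p^{n−n₀} b)` is a well-defined homomorphism from
`(ℤ/p^{n₀}ℤ, +)` to `ℂ^×`, there is a unique `c_χ ∈ ℤ/p^{n₀}ℤ` with
`χ(1 + p^{n−n₀} b) = e(b c_χ / p^{n₀})` for all integers `b`, and `c_χ` is a unit. -/
theorem stmt_0 (p n n₀ : ℕ) (hp : p.Prime) (hodd : Odd p)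
    (hn₀ : 0 < n₀) (hn : 2 * n₀ ≤ n)
    (χ : DirichletCharacter ℂ (p ^ n)) (hprim : χ.IsPrimitive)
    (hord : ∃ k : ℕ, orderOf χ = p ^ k) :
    (∀ b₁ b₂ : ℤ, (b₁ : ZMod (p ^ n₀)) = (b₂ : ZMod (p ^ n₀)) →
      χ (1 + (p : ZMod (p ^ n)) ^ (n - n₀) * b₁) = χ (1 + (p : ZMod (p ^ n)) ^ (n - n₀) * b₂)) ∧
    (∀ b₁ b₂ : ℤ, χ (1 + (p : ZMod (p ^ n)) ^ (n - n₀) * (b₁ + b₂)) =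
      χ (1 + (p : ZMod (p ^ n)) ^ (n - n₀) * b₁) * χ (1 + (p : ZMod (p ^ n)) ^ (n - n₀) * b₂)) ∧
    (∃! c : ZMod (p ^ n₀), ∀ b : ℤ,
      χ (1 + (p : ZMod (p ^ n)) ^ (n - n₀) * b) = e ((b * c.val : ℚ) / (p ^ n₀ : ℚ))) ∧
    (∀ c : ZMod (p ^ n₀),
      (∀ b : ℤ, χ (1 + (p : ZMod (p ^ n)) ^ (n - n₀) * b) = e ((b * c.val : ℚ) / (p ^ n₀ : ℚ))) →
      IsUnit c) := by
  haveI : NeZero (p ^ n) := ⟨pow_ne_zero _ hp.ne_zero⟩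
  haveI : NeZero (p ^ n₀) := ⟨pow_ne_zero _ hp.ne_zero⟩
  set t : ZMod (p ^ n) := (p : ZMod (p ^ n)) ^ (n - n₀) with ht
  have hpk : ∀ k : ℕ, n ≤ k → (p : ZMod (p ^ n)) ^ k = 0 := by
    intro k hk
    have h0 : ((p ^ k : ℕ) : ZMod (p ^ n)) = 0 :=
      (ZMod.natCast_eq_zero_iff _ _).mpr (pow_dvd_pow p hk)
    simpa using h0
  have htt : t * t = 0 := by rw [ht, ← pow_add]; exact hpk _ (by omega)
  have htp : t * (p : ZMod (p ^ n)) ^ n₀ = 0 := by rw [ht, ← pow_add]; exact hpk _ (by omega)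
  -- well-definedness on the level of ZMod (p^n)
  have hwd : ∀ b₁ b₂ : ℤ, (b₁ : ZMod (p ^ n₀)) = (b₂ : ZMod (p ^ n₀)) →
      (1 + t * b₁ : ZMod (p ^ n)) = 1 + t * b₂ := by
    intro b₁ b₂ h
    obtain ⟨s, hs⟩ : ((p : ℤ) ^ n₀) ∣ (b₁ - b₂) := by
      have h0 : ((b₁ - b₂ : ℤ) : ZMod (p ^ n₀)) = 0 := by push_cast [h]; ring
      have := (ZMod.intCast_zmod_eq_zero_iff_dvd (b₁ - b₂) (p ^ n₀)).mp h0
      exact_mod_cast this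
    have hb : b₁ = b₂ + (p : ℤ) ^ n₀ * s := by linarith
    calc (1 + t * (b₁ : ZMod (p ^ n)))
        = 1 + t * b₂ + (t * (p : ZMod (p ^ n)) ^ n₀) * s := by rw [hb]; push_cast; ring
      _ = 1 + t * b₂ := by rw [htp]; ring
  have hmulz : ∀ b₁ b₂ : ℤ, (1 + t * ((b₁ + b₂ : ℤ)) : ZMod (p ^ n)) =
      (1 + t * b₁) * (1 + t * b₂) := by
    intro b₁ b₂
    have h1 : ((1 + t * b₁) * (1 + t * b₂) : ZMod (p ^ n)) =
        1 + t * ((b₁ + b₂ : ℤ)) + (t * t) * (b₁ * b₂) := by push_cast; ring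
    rw [h1, htt]; ring
  have hhom : ∀ b₁ b₂ : ℤ, χ (1 + t * ((b₁ + b₂ : ℤ))) = χ (1 + t * b₁) * χ (1 + t * b₂) := by
    intro b₁ b₂; rw [hmulz]; exact map_mul χ _ _
  set F : ℤ → ℂ := fun b => χ (1 + t * b) with hF
  have hF0 : F 0 = 1 := by simp [hF]
  have hFmul : ∀ b₁ b₂ : ℤ, F (b₁ + b₂) = F b₁ * F b₂ := hhom
  have hFinv : ∀ b : ℤ, F b * F (-b) = 1 := by
    intro b; rw [← hFmul]; simpa using hF0
  have hF1 : F 1 ≠ 0 := by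
    intro h; simpa [h] using hFinv 1
  have hFz : ∀ b : ℤ, F b = F 1 ^ b := by
    intro b
    induction b using Int.induction_on with
    | zero => simpa using hF0
    | succ i ih => rw [hFmul, ih, zpow_add₀ hF1]; simp
    | pred i ih =>
        have hm1 : F (-1) = (F 1)⁻¹ :=
          eq_inv_of_mul_eq_one_left (by simpa [mul_comm] using hFinv 1)
        have hstep : F (-(i : ℤ) - 1) = F (-(i : ℤ)) * F (-1) := by
          rw [← hFmul]; ring_nf
        rw [hstep, ih, hm1, zpow_sub₀ hF1]; simp [div_eq_mul_inv]
  have hroot : F 1 ^ (p ^ n₀) = 1 := by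
    have h1 : F ((p : ℤ) ^ n₀) = 1 := by
      show χ (1 + t * (((p : ℤ) ^ n₀ : ℤ) : ZMod (p ^ n))) = 1
      rw [show ((((p : ℤ) ^ n₀ : ℤ)) : ZMod (p ^ n)) = (p : ZMod (p ^ n)) ^ n₀ by
        push_cast; ring, htp, add_zero, map_one]
    have h3 := (hFz ((p : ℤ) ^ n₀)).symm.trans h1
    rw [← zpow_natCast]
    rw [show ((p ^ n₀ : ℕ) : ℤ) = (p : ℤ) ^ n₀ by push_cast; ring]
    exact h3
  obtain ⟨i, hilt, hi⟩ :=
    (Complex.isPrimitiveRoot_exp (p ^ n₀) (NeZero.ne _)).eq_pow_of_pow_eq_one hroot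
  have hF1eq : F 1 = Complex.exp ((i : ℂ) * (2 * Real.pi * Complex.I / ((p ^ n₀ : ℕ) : ℂ))) := by
    rw [Complex.exp_nat_mul, hi]
  have hval : ∀ b : ℤ, F b = e ((b * i : ℚ) / (p ^ n₀ : ℚ)) := by
    intro b
    rw [hFz, hF1eq, ← Complex.exp_int_mul]
    show _ = Complex.exp _
    congr 1
    push_cast
    ring
  -- uniqueness helper
  have huniq : ∀ c₁ c₂ : ZMod (p ^ n₀),
      (∀ b : ℤ, F b = e ((b * c₁.val : ℚ) / (p ^ n₀ : ℚ))) →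
      (∀ b : ℤ, F b = e ((b * c₂.val : ℚ) / (p ^ n₀ : ℚ))) → c₁ = c₂ := by
    intro c₁ c₂ h₁ h₂
    have h := (h₁ 1).symm.trans (h₂ 1)
    unfold e at h
    rw [Complex.exp_eq_exp_iff_exists_int] at h
    obtain ⟨k, hk⟩ := h
    have hne : (2 * (Real.pi : ℂ) * Complex.I) ≠ 0 := Complex.two_pi_I_ne_zero
    have h2 : (((((1 : ℤ)) * c₁.val : ℚ) / (p ^ n₀ : ℚ) : ℚ) : ℂ) =
        ((((1 : ℤ)) * c₂.val : ℚ) / (p ^ n₀ : ℚ) : ℚ) + (k : ℂ) := by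
      apply mul_left_cancel₀ hne
      rw [hk]; ring
    have h3 : ((((1 : ℤ)) * c₁.val : ℚ) / (p ^ n₀ : ℚ) : ℚ) =
        (((1 : ℤ)) * c₂.val : ℚ) / (p ^ n₀ : ℚ) + (k : ℚ) := by exact_mod_cast h2
    have hPne : ((p : ℚ)) ^ n₀ ≠ 0 := pow_ne_zero _ (by exact_mod_cast hp.ne_zero)
    have h4 : (c₁.val : ℚ) = c₂.val + k * (p : ℚ) ^ n₀ := by
      rw [div_eq_iff hPne, add_mul, div_mul_cancel₀ _ hPne] at h3
      simp only [Int.cast_one, one_mul] at h3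
      linarith
    have h5 : (c₁.val : ℤ) = c₂.val + k * (p : ℤ) ^ n₀ := by exact_mod_cast h4
    have h6 : ((c₁.val : ℤ) : ZMod (p ^ n₀)) = ((c₂.val : ℤ) : ZMod (p ^ n₀)) := by
      rw [h5]
      have hz : ((p : ZMod (p ^ n₀))) ^ n₀ = 0 := by
        rw [← Nat.cast_pow, ZMod.natCast_self]
      push_cast [hz]
      ring
    have h7 : ((c₁.val : ℕ) : ZMod (p ^ n₀)) = ((c₂.val : ℕ) : ZMod (p ^ n₀)) := by
      exact_mod_cast h6
    rwa [ZMod.natCast_val, ZMod.natCast_val, ZMod.cast_id, ZMod.cast_id] at h7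
  refine ⟨fun b₁ b₂ h => by rw [hwd b₁ b₂ h],
    fun b₁ b₂ => by have := hhom b₁ b₂; push_cast at this ⊢; exact this,
    ⟨(i : ZMod (p ^ n₀)), ?_, ?_⟩, ?_⟩
  · intro b
    rw [ZMod.val_cast_of_lt hilt]
    exact hval b
  · intro y hy
    exact huniq y (i : ZMod (p ^ n₀)) hy (by
      intro b; rw [ZMod.val_cast_of_lt hilt]; exact hval b)
  -- unit part
  · intro c hc
    by_contra hnu
    have hpc : p ∣ c.val := by
      by_contra hpc
      apply hnu
      have h0 : Nat.Coprime p c.val := (Nat.Prime.coprime_iff_not_dvd hp).mpr hpc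
      have hcop : Nat.Coprime c.val (p ^ n₀) := (Nat.Coprime.symm h0).pow_right _
      have := (ZMod.isUnit_iff_coprime c.val (p ^ n₀)).mpr hcop
      rwa [ZMod.natCast_val, ZMod.cast_id] at this
    obtain ⟨m, hm⟩ := hpc
    -- χ factors through p^(n-1)
    have hft : χ.FactorsThrough (p ^ (n - 1)) := by
      rw [DirichletCharacter.factorsThrough_iff_ker_unitsMap (pow_dvd_pow p (Nat.sub_le n 1))]
      intro u hu
      rw [MonoidHom.mem_ker] at hu ⊢
      have hu1 : (ZMod.castHom (pow_dvd_pow p (Nat.sub_le n 1)) (ZMod (p ^ (n - 1))))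
          (u : ZMod (p ^ n)) = 1 := by
        have := congrArg (fun x : (ZMod (p ^ (n - 1)))ˣ => (x : ZMod (p ^ (n - 1)))) hu
        simpa [ZMod.unitsMap_def] using this
      set A : ℤ := ((u : ZMod (p ^ n)).val : ℤ) with hA
      have hA1 : ((A : ZMod (p ^ n))) = (u : ZMod (p ^ n)) := by
        rw [hA]; push_cast
        rw [ZMod.natCast_val, ZMod.cast_id]
      have hA2 : ((A : ZMod (p ^ (n - 1)))) = 1 := by
        rw [hA]; push_cast
        rw [ZMod.natCast_val]
        simpa using hu1
      obtain ⟨s, hs⟩ : ((p : ℤ) ^ (n - 1)) ∣ (A - 1) := by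
        have h0 : ((A - 1 : ℤ) : ZMod (p ^ (n - 1))) = 0 := by push_cast [hA2]; ring
        have := (ZMod.intCast_zmod_eq_zero_iff_dvd (A - 1) (p ^ (n - 1))).mp h0
        exact_mod_cast this
      have key : (1 + t * (((p : ℤ) ^ (n₀ - 1) * s : ℤ) : ZMod (p ^ n)) : ZMod (p ^ n)) =
          (u : ZMod (p ^ n)) := by
        rw [← hA1, show A = 1 + (p : ℤ) ^ (n - 1) * s by linarith]
        push_cast
        rw [ht, ← mul_assoc, ← pow_add, show n - n₀ + (n₀ - 1) = n - 1 by omega]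
      have hrhs : e (((((p : ℤ) ^ (n₀ - 1) * s : ℤ) : ℚ) * c.val) / (p ^ n₀ : ℚ)) = 1 := by
        have harg : ((((p : ℤ) ^ (n₀ - 1) * s : ℤ) : ℚ) * c.val) / (p ^ n₀ : ℚ)
            = ((s * m : ℤ) : ℚ) := by
          rw [hm]
          rw [show (p : ℚ) ^ n₀ = (p : ℚ) ^ (n₀ - 1) * p by
            rw [← pow_succ]; congr 1; omega]
          have hp1 : (p : ℚ) ^ (n₀ - 1) ≠ 0 := pow_ne_zero _ (by exact_mod_cast hp.ne_zero)
          have hp2 : (p : ℚ) ≠ 0 := by exact_mod_cast hp.ne_zero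
          field_simp
          push_cast
          ring
        rw [harg]
        unfold e
        rw [show (2 * (Real.pi : ℂ) * Complex.I * (((s * m : ℤ) : ℚ) : ℂ))
            = ((s * m : ℤ) : ℂ) * (2 * Real.pi * Complex.I) by push_cast; ring]
        exact Complex.exp_int_mul_two_pi_mul_I _
      have hchi : χ (u : ZMod (p ^ n)) = 1 := by
        rw [← key, hc ((p : ℤ) ^ (n₀ - 1) * s)]
        exact hrhs
      ext
      rw [MulChar.coe_toUnitHom]
      simpa using hchi
    have hle : χ.conductor ≤ p ^ (n - 1) := Nat.sInf_le hft
    have hlt : p ^ (n - 1) < p ^ n := Nat.pow_lt_pow_right hp.one_lt (by omega)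
    rw [DirichletCharacter.IsPrimitive] at hprim
    omega
end

section
/- Let χ be a primitive Dirichlet character modulo p^n of p-power order, with associated unit c_χ ∈ (ℤ/p^{n₀}ℤ)^×. Then for every ζ ∈ L with ζ^{p^{n−1}} = 1, the Galois-averaged twisted Gauss sum satisfies (1/(|G|·p^n))·Σ_{σ∈G} G₁(χ̄^σ)·G(χ^σ)·σ(ζ) = (1/|G|)·Σ_{σ∈G} σ(ζ). -/
open Complex

lemma e_eq_std {N : ℕ} [NeZero N] (x : ZMod N) :
    e ((x.val : ℚ) / (N : ℚ)) = ZMod.stdAddChar x := by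
  rw [ZMod.stdAddChar_apply, ZMod.toCircle_apply, e]
  push_cast
  ring_nf

lemma std_e_nat {Q : ℕ} [NeZero Q] (k : ℕ) :
    ZMod.stdAddChar ((k : ZMod Q)) = e ((k : ℚ) / (Q : ℚ)) := by
  have : ((k : ℤ) : ZMod Q) = ((k : ℕ) : ZMod Q) := by push_cast; rfl
  rw [← this, ZMod.stdAddChar_coe, e]
  push_cast
  ring_nf

lemma e_ne_zero (x : ℚ) : e x ≠ 0 := Complex.exp_ne_zero _

lemma cast_char {p n n₀ : ℕ} (hp : p.Prime) (hn₀ : 0 < n₀) (hn : 2 * n₀ ≤ n)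
    (hdvd : p ^ n₀ ∣ p ^ n) [NeZero (p ^ n)] [NeZero (p ^ n₀)]
    (x : ZMod (p ^ n)) (j : ZMod (p ^ n₀)) :
    ZMod.stdAddChar (j * ZMod.castHom hdvd (ZMod (p ^ n₀)) x)
      = ZMod.stdAddChar (x * ((p : ZMod (p ^ n)) ^ (n - n₀) * ((j.val : ℕ) : ZMod (p ^ n)))) := by
  have hp0 : (p : ℚ) ≠ 0 := Nat.cast_ne_zero.mpr hp.pos.ne'
  have hxx : (((x.val : ℕ) : ZMod (p ^ n))) = x := ZMod.natCast_zmod_val x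
  have h1 : j * ZMod.castHom hdvd (ZMod (p ^ n₀)) x
      = (((j.val * x.val : ℕ)) : ZMod (p ^ n₀)) := by
    conv_lhs => rw [← hxx, ← ZMod.natCast_zmod_val j]
    rw [map_natCast]
    push_cast
    ring
  have h2 : x * ((p : ZMod (p ^ n)) ^ (n - n₀) * ((j.val : ℕ) : ZMod (p ^ n)))
      = (((x.val * (p ^ (n - n₀) * j.val) : ℕ)) : ZMod (p ^ n)) := by
    conv_lhs => rw [← hxx]
    push_cast
    ring
  rw [h1, h2, std_e_nat, std_e_nat]
  congr 1
  have hexp : (p : ℚ) ^ n = (p : ℚ) ^ (n - n₀) * (p : ℚ) ^ n₀ := by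
    rw [← pow_add]
    congr 1
    omega
  have hM : ((p:ℚ)) ^ n₀ ≠ 0 := pow_ne_zero _ hp0
  have hN : ((p:ℚ)) ^ n ≠ 0 := pow_ne_zero _ hp0
  rw [div_eq_div_iff (by exact_mod_cast hM) (by exact_mod_cast hN)]
  push_cast
  rw [hexp]
  ring

lemma step_dvd {p : ℕ} (hp : p.Prime) {i : ℕ} (hi : 1 ≤ i) {a : ℤ} (h : (p : ℤ) ^ i ∣ a - 1) :
    (p : ℤ) ^ (i + 1) ∣ a ^ p - 1 := by
  obtain ⟨y, hy⟩ := h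
  have ha : a = (p : ℤ) ^ i * y + 1 := by linarith
  subst ha
  rw [add_pow, Finset.sum_range_succ']
  simp only [one_pow, mul_one, pow_zero, Nat.choose_zero_right, Nat.cast_one, one_mul]
  rw [add_sub_cancel_right]
  apply Finset.dvd_sum
  intro k _
  rcases Nat.eq_zero_or_pos k with hk0 | hk1
  · subst hk0
    rw [pow_one, Nat.choose_one_right]
    exact ⟨y, by ring⟩
  · apply dvd_mul_of_dvd_left
    rw [mul_pow, ← pow_mul]
    exact dvd_mul_of_dvd_left (pow_dvd_pow _ (by nlinarith)) _

lemma iter_dvd {p : ℕ} (hp : p.Prime) {j : ℕ} (hj : 1 ≤ j) {a : ℤ} (h : (p : ℤ) ^ j ∣ a - 1) :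
    ∀ k : ℕ, (p : ℤ) ^ (j + k) ∣ a ^ (p ^ k) - 1 := by
  intro k
  induction k with
  | zero => simpa using h
  | succ k ih =>
    have h2 := step_dvd hp (le_trans hj (Nat.le_add_right j k)) ih
    rw [← pow_mul, ← pow_succ] at h2
    rw [← Nat.add_assoc]
    exact h2

/-- `(1 + p^(n-n₀) b)^(p^n₀) = 1` in `ZMod (p^n)`. -/
lemma pow_one_add_eq_one {p n n₀ : ℕ} (hp : p.Prime) (hn₀ : 0 < n₀) (hn : 2 * n₀ ≤ n) (b : ℤ) :
    (1 + (p : ZMod (p ^ n)) ^ (n - n₀) * (b : ZMod (p ^ n))) ^ (p ^ n₀) = 1 := by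
  have hn₀n : n₀ ≤ n := le_trans (by omega) hn
  have hm1 : 1 ≤ n - n₀ := by omega
  have hdvd : (p : ℤ) ^ (n - n₀) ∣ (1 + (p : ℤ) ^ (n - n₀) * b) - 1 := ⟨b, by ring⟩
  have h := iter_dvd hp hm1 hdvd n₀
  rw [show n - n₀ + n₀ = n by omega] at h
  have hcast : (((1 + (p : ℤ) ^ (n - n₀) * b) ^ (p ^ n₀) - 1 : ℤ) : ZMod (p ^ n)) = 0 := by
    rw [ZMod.intCast_zmod_eq_zero_iff_dvd]
    exact_mod_cast h
  push_cast at hcast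
  linear_combination hcast

/-- An element of `ZMod (p^n)` mapping to a unit mod `p^n₀` is a unit. -/
lemma isUnit_of_cast {p n n₀ : ℕ} [NeZero (p ^ n)] (hp : p.Prime) (hn₀ : 0 < n₀)
    (hdvd : p ^ n₀ ∣ p ^ n)
    {x : ZMod (p ^ n)} {c : ZMod (p ^ n₀)} (hc : IsUnit c)
    (hx : ZMod.castHom hdvd (ZMod (p ^ n₀)) x = c) : IsUnit x := by
  haveI : NeZero (p ^ n₀) := ⟨pow_ne_zero _ hp.pos.ne'⟩
  have hpM : p ∣ p ^ n₀ := dvd_pow_self p hn₀.ne'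
  -- c = (x.val : ZMod (p^n₀))
  have hxc : ((x.val : ℕ) : ZMod (p ^ n₀)) = c := by
    rw [ZMod.natCast_val, ← hx, ZMod.castHom_apply]
  have hcval : c.val = x.val % (p ^ n₀) := by rw [← hxc, ZMod.val_natCast]
  -- p does not divide c.val
  have hcnd : ¬ p ∣ c.val := by
    intro hpc
    have h1 : IsUnit ((c.val : ℕ) : ZMod (p ^ n₀)) := by rwa [ZMod.natCast_zmod_val]
    rw [ZMod.isUnit_iff_coprime] at h1
    have h2 := Nat.Coprime.coprime_dvd_left hpc (Nat.Coprime.coprime_dvd_right hpM h1)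
    rw [Nat.Coprime, Nat.gcd_self] at h2
    exact hp.one_lt.ne' h2
  have hxnd : ¬ p ∣ x.val := by
    intro hpx
    exact hcnd (hcval ▸ (Nat.dvd_mod_iff hpM).mpr hpx)
  have : IsUnit ((x.val : ℕ) : ZMod (p ^ n)) := by
    rw [ZMod.isUnit_iff_coprime]
    exact Nat.Coprime.pow_right _ (Nat.coprime_comm.mp (hp.coprime_iff_not_dvd.mpr hxnd))
  rwa [ZMod.natCast_zmod_val] at this

/-- Sum over units extends to sum over the whole ring when `f` vanishes on non-units. -/
lemma sum_units_eq {R : Type*} [CommRing R] [Fintype R] [DecidableEq R] (f : R → ℂ)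
    (hf : ∀ x : R, ¬ IsUnit x → f x = 0) :
    ∑ u : Rˣ, f (u : R) = ∑ x : R, f x := by
  classical
  rw [← Finset.sum_filter_of_ne (p := fun x : R => IsUnit x)
    (fun x _ hfx => by by_contra hu; exact hfx (hf x hu))]
  apply Finset.sum_bij (fun (u : Rˣ) _ => (u : R))
  · intro u _; simp [u.isUnit]
  · intro a _ b _ h; exact Units.ext h
  · intro x hx
    have hu : IsUnit x := (Finset.mem_filter.mp hx).2
    exact ⟨hu.unit, Finset.mem_univ _, hu.unit_spec.symm⟩
  · intro u _; rfl

set_option maxHeartbeats 1000000 in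
lemma key (p n n₀ : ℕ) (hp : p.Prime) (hn₀ : 0 < n₀) (hn : 2 * n₀ ≤ n)
    (hdvd : p ^ n₀ ∣ p ^ n) [NeZero (p ^ n)] [NeZero (p ^ n₀)]
    (φ : ZMod (p ^ n) → ℂ)
    (hmul : ∀ x y, φ (x * y) = φ x * φ y)
    (h0 : ∀ x, ¬ IsUnit x → φ x = 0)
    (hneg : φ (-1) = 1)
    (c : ZMod (p ^ n₀)) (hc : IsUnit c)
    (hφc : ∀ b : ℤ, φ (1 + (p : ZMod (p ^ n)) ^ (n - n₀) * (b : ZMod (p ^ n)))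
       = e ((b * c.val : ℚ) / (p ^ n₀ : ℚ))) :
    (∑ a ∈ Finset.univ.filter (fun a : (ZMod (p ^ n))ˣ =>
        ZMod.castHom hdvd (ZMod (p ^ n₀)) (a : ZMod (p ^ n)) = c),
      (φ (a : ZMod (p ^ n)))⁻¹ * e (((a : ZMod (p ^ n)).val : ℚ) / (p ^ n : ℚ))) *
    (∑ a : (ZMod (p ^ n))ˣ,
      φ (a : ZMod (p ^ n)) * e (((a : ZMod (p ^ n)).val : ℚ) / (p ^ n : ℚ)))
    = ((p ^ n : ℕ) : ℂ) := by
  have hMne : ((p ^ n₀ : ℕ) : ℂ) ≠ 0 := Nat.cast_ne_zero.mpr (pow_ne_zero _ hp.pos.ne')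
  have hNne : ((p ^ n : ℕ) : ℂ) ≠ 0 := Nat.cast_ne_zero.mpr (pow_ne_zero _ hp.pos.ne')
  -- φ 1 = 1
  have h1 : φ 1 = 1 := by
    have := hφc 0
    simp only [Int.cast_zero, mul_zero, add_zero, zero_mul] at this
    rw [this]
    norm_num [e]
  have hφne : ∀ x : ZMod (p ^ n), IsUnit x → φ x ≠ 0 := by
    intro x hx hzero
    have h2 : φ x * φ ↑hx.unit⁻¹ = 1 := by rw [← hmul, hx.mul_val_inv, h1]
    rw [hzero, zero_mul] at h2
    exact zero_ne_one h2
  -- abbreviations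
  set ψ : AddChar (ZMod (p ^ n)) ℂ := ZMod.stdAddChar with hψdef
  set ψM : AddChar (ZMod (p ^ n₀)) ℂ := ZMod.stdAddChar with hψMdef
  set π : ZMod (p ^ n) →+* ZMod (p ^ n₀) := ZMod.castHom hdvd (ZMod (p ^ n₀)) with hπdef
  set w : ZMod (p ^ n₀) → ZMod (p ^ n) :=
    fun j => (p : ZMod (p ^ n)) ^ (n - n₀) * ((j.val : ℕ) : ZMod (p ^ n)) with hwdef
  -- conversion of the two factors
  have hG : (∑ a : (ZMod (p ^ n))ˣ,
      φ (a : ZMod (p ^ n)) * e (((a : ZMod (p ^ n)).val : ℚ) / (p ^ n : ℚ)))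
      = ∑ y : ZMod (p ^ n), φ y * ψ y := by
    rw [← sum_units_eq (fun x => φ x * ψ x) (fun x hx => by simp [h0 x hx])]
    apply Finset.sum_congr rfl
    intro u _
    rw [hψdef, ← e_eq_std]
    push_cast
    rfl
  have hG1 : (∑ a ∈ Finset.univ.filter (fun a : (ZMod (p ^ n))ˣ =>
        ZMod.castHom hdvd (ZMod (p ^ n₀)) (a : ZMod (p ^ n)) = c),
      (φ (a : ZMod (p ^ n)))⁻¹ * e (((a : ZMod (p ^ n)).val : ℚ) / (p ^ n : ℚ)))
      = ∑ x : ZMod (p ^ n), (if π x = c then (φ x)⁻¹ * ψ x else 0) := by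
    rw [Finset.sum_filter,
      ← sum_units_eq (fun x => if π x = c then (φ x)⁻¹ * ψ x else 0)
        (fun x hx => by simp [h0 x hx])]
    apply Finset.sum_congr rfl
    intro u _
    rw [hψdef, hπdef, ← e_eq_std]
    push_cast
    rfl
  rw [hG, hG1]
  calc
    (∑ x : ZMod (p ^ n), (if π x = c then (φ x)⁻¹ * ψ x else 0)) *
        (∑ y : ZMod (p ^ n), φ y * ψ y)
      = ∑ x : ZMod (p ^ n), ∑ y : ZMod (p ^ n),
          (if π x = c then (φ x)⁻¹ * ψ x else 0) * (φ y * ψ y) :=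
        Finset.sum_mul_sum _ _ _ _
    _ = ∑ x : ZMod (p ^ n), ∑ t : ZMod (p ^ n),
          (if π x = c then φ t * ψ (x * (1 + t)) else 0) := by
        apply Finset.sum_congr rfl
        intro x _
        by_cases hx : IsUnit x
        · have hb : Function.Bijective (fun t : ZMod (p ^ n) => x * t) := by
            have := hx.unit.mulLeft_bijective
            simpa only [hx.unit_spec] using this
          rw [← Fintype.sum_bijective _ hb
            (fun t => (if π x = c then (φ x)⁻¹ * ψ x else 0) * (φ (x * t) * ψ (x * t)))
            (fun y => (if π x = c then (φ x)⁻¹ * ψ x else 0) * (φ y * ψ y))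
            (fun t => rfl)]
          apply Finset.sum_congr rfl
          intro t _
          by_cases h : π x = c
          · rw [if_pos h, if_pos h, hmul x t, mul_one_add x t, AddChar.map_add_eq_mul]
            have hne := hφne x hx
            field_simp
          · rw [if_neg h, if_neg h, zero_mul]
        · have hπx : ¬ (π x = c) := fun h => hx (isUnit_of_cast hp hn₀ hdvd hc h)
          apply Finset.sum_congr rfl
          intro t _
          rw [if_neg hπx, if_neg hπx, zero_mul]
    _ = ∑ x : ZMod (p ^ n), ∑ t : ZMod (p ^ n),
          ((p ^ n₀ : ℕ) : ℂ)⁻¹ * ∑ j : ZMod (p ^ n₀),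
            ψM (j * (π x - c)) * (φ t * ψ (x * (1 + t))) := by
        apply Finset.sum_congr rfl; intro x _
        apply Finset.sum_congr rfl; intro t _
        rw [← Finset.sum_mul, AddChar.sum_mulShift _ (ZMod.isPrimitive_stdAddChar _),
          ZMod.card]
        by_cases h : π x = c
        · rw [if_pos h, if_pos (sub_eq_zero_of_eq h)]
          rw [← mul_assoc, inv_mul_cancel₀ hMne, one_mul]
        · rw [if_neg h, if_neg (fun hh => h (sub_eq_zero.mp hh)), Nat.cast_zero, zero_mul,
            mul_zero]
    _ = ((p ^ n₀ : ℕ) : ℂ)⁻¹ * ∑ t : ZMod (p ^ n), ∑ j : ZMod (p ^ n₀),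
          ∑ x : ZMod (p ^ n), ψM (j * (π x - c)) * (φ t * ψ (x * (1 + t))) := by
        simp_rw [← Finset.mul_sum]
        congr 1
        rw [Finset.sum_comm]
        exact Finset.sum_congr rfl fun t _ => Finset.sum_comm
    _ = ((p ^ n₀ : ℕ) : ℂ)⁻¹ * ∑ t : ZMod (p ^ n), ∑ j : ZMod (p ^ n₀),
          (φ t * (ψM (j * c))⁻¹) * ∑ x : ZMod (p ^ n), ψ (x * (1 + t + w j)) := by
        congr 1
        apply Finset.sum_congr rfl; intro t _
        apply Finset.sum_congr rfl; intro j _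
        rw [Finset.mul_sum]
        apply Finset.sum_congr rfl; intro x _
        rw [mul_sub, AddChar.map_sub_eq_div, hψMdef, hπdef,
          cast_char hp hn₀ hn hdvd x j, div_eq_mul_inv]
        have harg : x * (1 + t + w j) = x * (1 + t) + x * w j := by ring
        rw [harg, AddChar.map_add_eq_mul]
        show (ψ (x * w j) * (ψM (j * c))⁻¹) * (φ t * ψ (x * (1 + t)))
          = (φ t * (ψM (j * c))⁻¹) * (ψ (x * (1 + t)) * ψ (x * w j))
        ring
    _ = ((p ^ n₀ : ℕ) : ℂ)⁻¹ * ∑ t : ZMod (p ^ n), ∑ j : ZMod (p ^ n₀),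
          (φ t * (ψM (j * c))⁻¹) *
            (if 1 + t + w j = 0 then ((p ^ n : ℕ) : ℂ) else 0) := by
        congr 1
        apply Finset.sum_congr rfl; intro t _
        apply Finset.sum_congr rfl; intro j _
        rw [AddChar.sum_mulShift _ (ZMod.isPrimitive_stdAddChar _), ZMod.card,
          apply_ite (Nat.cast : ℕ → ℂ), Nat.cast_zero]
    _ = ((p ^ n₀ : ℕ) : ℂ)⁻¹ * ∑ j : ZMod (p ^ n₀), ∑ t : ZMod (p ^ n),
          (if t = -1 - w j then (φ t * (ψM (j * c))⁻¹) * ((p ^ n : ℕ) : ℂ) else 0) := by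
        congr 1
        rw [Finset.sum_comm]
        apply Finset.sum_congr rfl; intro j _
        apply Finset.sum_congr rfl; intro t _
        by_cases h : t = -1 - w j
        · rw [if_pos (by rw [h]; ring), if_pos h]
        · rw [if_neg (fun hh => h (by linear_combination hh)), if_neg h, mul_zero]
    _ = ((p ^ n₀ : ℕ) : ℂ)⁻¹ * ∑ j : ZMod (p ^ n₀),
          (φ (-1 - w j) * (ψM (j * c))⁻¹) * ((p ^ n : ℕ) : ℂ) := by
        congr 1
        apply Finset.sum_congr rfl; intro j _
        rw [Finset.sum_ite_eq' Finset.univ (-1 - w j)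
          (fun t => (φ t * (ψM (j * c))⁻¹) * ((p ^ n : ℕ) : ℂ)),
          if_pos (Finset.mem_univ _)]
    _ = ((p ^ n₀ : ℕ) : ℂ)⁻¹ * ∑ _j : ZMod (p ^ n₀), ((p ^ n : ℕ) : ℂ) := by
        congr 1
        apply Finset.sum_congr rfl; intro j _
        have hwv : (-1 : ZMod (p ^ n)) - w j = (-1) * (1 + w j) := by ring
        have hφval : φ (-1 - w j) = e ((j.val * c.val : ℚ) / ((p ^ n₀ : ℕ) : ℚ)) := by
          rw [hwv, hmul, hneg, one_mul]
          have := hφc (j.val : ℤ)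
          rw [show (((j.val : ℤ) : ZMod (p ^ n))) = ((j.val : ℕ) : ZMod (p ^ n)) by
            push_cast; rfl] at this
          rw [hwdef]
          simp only []
          rw [this]
          congr 1
          push_cast
          ring
        have hψval : ψM (j * c) = e ((j.val * c.val : ℚ) / ((p ^ n₀ : ℕ) : ℚ)) := by
          have hjc : j * c = (((j.val * c.val : ℕ)) : ZMod (p ^ n₀)) := by
            rw [Nat.cast_mul, ZMod.natCast_zmod_val, ZMod.natCast_zmod_val]
          rw [hjc, hψMdef, std_e_nat]
          congr 1
          push_cast
          ring
        rw [hφval, hψval, mul_inv_cancel₀ (e_ne_zero _), one_mul]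
    _ = ((p ^ n : ℕ) : ℂ) := by
        rw [Finset.sum_const, Finset.card_univ, ZMod.card, nsmul_eq_mul]
        rw [inv_mul_cancel_left₀ hMne]


/-- the paper's Lemma 3.4: for a primitive Dirichlet character `χ` modulo `p^n`
of `p`-power order (values in `L = ℚ(ζ_{p^{n−1}})`, embedded in `ℂ` via `ι`), with associated
unit `c ∈ (ℤ/p^{n₀}ℤ)^×`, and `G = Gal(L/K)` with `K = ℚ(ζ_{p^{n₀}})`, one has, for every
`ζ ∈ L` with `ζ^{p^{n−1}} = 1`:
`(1/(|G| p^n)) Σ_{σ∈G} G₁(χ̄^σ) G(χ^σ) σ(ζ) = (1/|G|) Σ_{σ∈G} σ(ζ)`. -/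
theorem stmt_3 (p n n₀ : ℕ) [hp : Fact p.Prime] (hodd : Odd p)
    (hn₀ : 0 < n₀) (hn : 2 * n₀ ≤ n)
    (K L : Type*) [Field K] [Field L] [Algebra ℚ K] [Algebra ℚ L] [Algebra K L]
    [IsScalarTower ℚ K L]
    [IsCyclotomicExtension {p ^ (n - 1)} ℚ L]
    [IsCyclotomicExtension {p ^ n₀} ℚ K]
    [FiniteDimensional K L]
    (ι : L →+* ℂ)
    (χ : DirichletCharacter L (p ^ n)) (hprim : χ.IsPrimitive)
    (hord : ∃ k : ℕ, orderOf χ = p ^ k)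
    (c : ZMod (p ^ n₀)) (hc : IsUnit c)
    (hcχ : ∀ b : ℤ, ι (χ (1 + (p : ZMod (p ^ n)) ^ (n - n₀) * b)) =
      e ((b * c.val : ℚ) / (p ^ n₀ : ℚ)))
    (ζ : L) (hζ : ζ ^ (p ^ (n - 1)) = 1) :
    ((Fintype.card (L ≃ₐ[K] L) * p ^ n : ℕ) : ℂ)⁻¹ *
      ∑ σ : L ≃ₐ[K] L,
        (∑ a ∈ Finset.univ.filter (fun a : (ZMod (p ^ n))ˣ =>
            ZMod.castHom (pow_dvd_pow p (le_trans (Nat.le_mul_of_pos_left n₀ two_pos) hn)) (ZMod (p ^ n₀)) (a : ZMod (p ^ n)) = c),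
          (ι (σ (χ (a : ZMod (p ^ n)))))⁻¹ * e (((a : ZMod (p ^ n)).val : ℚ) / (p ^ n : ℚ))) *
        (∑ a : (ZMod (p ^ n))ˣ,
          ι (σ (χ (a : ZMod (p ^ n)))) * e (((a : ZMod (p ^ n)).val : ℚ) / (p ^ n : ℚ))) *
        ι (σ ζ)
    = ((Fintype.card (L ≃ₐ[K] L) : ℕ) : ℂ)⁻¹ * ∑ σ : L ≃ₐ[K] L, ι (σ ζ) := by
  haveI : NeZero (p ^ n) := ⟨pow_ne_zero _ hp.out.pos.ne'⟩
  haveI : NeZero (p ^ n₀) := ⟨pow_ne_zero _ hp.out.pos.ne'⟩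
  -- χ(-1) = 1
  have hχneg : χ (-1) = 1 := by
    obtain ⟨k, hk⟩ := hord
    have h2 : χ (-1) * χ (-1) = 1 := by rw [← map_mul]; norm_num
    have hpk : χ (-1) ^ (p ^ k) = 1 := by
      have horder := pow_orderOf_eq_one χ
      rw [hk] at horder
      calc χ (-1) ^ (p ^ k) = (χ ^ (p ^ k)) (-1) :=
            (MulChar.pow_apply' χ (pow_ne_zero k hp.out.pos.ne') (-1)).symm
        _ = (1 : MulChar (ZMod (p ^ n)) L) (-1) := by rw [horder]
        _ = 1 := MulChar.one_apply isUnit_one.neg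
    obtain ⟨t, ht⟩ := hodd.pow (n := k)
    calc χ (-1) = (χ (-1) * χ (-1)) ^ t * χ (-1) := by rw [h2, one_pow, one_mul]
      _ = χ (-1) ^ (2 * t + 1) := by ring
      _ = 1 := by rw [← ht]; exact hpk
  -- Galois invariance of p^n₀-th roots of unity
  have hfix : ∀ (σ : L ≃ₐ[K] L) (x : L), x ^ (p ^ n₀) = 1 → σ x = x := by
    intro σ x hx
    obtain ⟨ζK, hζK⟩ := IsCyclotomicExtension.exists_isPrimitiveRoot ℚ (B := K)
      (S := {p ^ n₀}) (Set.mem_singleton _) (pow_ne_zero _ hp.out.pos.ne')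
    have hζK' : IsPrimitiveRoot ζK (p ^ n₀) := hζK
    have hμ : IsPrimitiveRoot (algebraMap K L ζK) (p ^ n₀) :=
      hζK'.map_of_injective (algebraMap K L).injective
    obtain ⟨i, -, hi⟩ := hμ.eq_pow_of_pow_eq_one hx
    rw [← hi, map_pow, AlgEquiv.commutes]
  -- the per-σ Gauss sum identity
  have h2 : (∑ σ : L ≃ₐ[K] L,
        (∑ a ∈ Finset.univ.filter (fun a : (ZMod (p ^ n))ˣ =>
            ZMod.castHom (pow_dvd_pow p (le_trans (Nat.le_mul_of_pos_left n₀ two_pos) hn)) (ZMod (p ^ n₀)) (a : ZMod (p ^ n)) = c),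
          (ι (σ (χ (a : ZMod (p ^ n)))))⁻¹ * e (((a : ZMod (p ^ n)).val : ℚ) / (p ^ n : ℚ))) *
        (∑ a : (ZMod (p ^ n))ˣ,
          ι (σ (χ (a : ZMod (p ^ n)))) * e (((a : ZMod (p ^ n)).val : ℚ) / (p ^ n : ℚ))) *
        ι (σ ζ))
      = ∑ σ : L ≃ₐ[K] L, ((p ^ n : ℕ) : ℂ) * ι (σ ζ) := by
    apply Finset.sum_congr rfl
    intro σ _
    refine congrArg (· * ι (σ ζ)) ?_
    refine key p n n₀ hp.out hn₀ hn _ (fun x => ι (σ (χ x))) ?_ ?_ ?_ c hc ?_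
    · intro x y
      show ι (σ (χ (x * y))) = _
      rw [map_mul, map_mul, map_mul]
    · intro x hx
      show ι (σ (χ x)) = 0
      rw [MulChar.map_nonunit χ hx, map_zero, map_zero]
    · show ι (σ (χ (-1))) = 1
      rw [hχneg, map_one, map_one]
    · intro b
      show ι (σ (χ _)) = _
      have hroot : (χ (1 + (p : ZMod (p ^ n)) ^ (n - n₀) * (b : ZMod (p ^ n)))) ^ (p ^ n₀)
          = 1 := by
        rw [← map_pow, pow_one_add_eq_one hp.out hn₀ hn b, map_one]
      rw [hfix σ _ hroot]
      exact hcχ b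
  rw [h2, ← Finset.mul_sum]
  have hc0 : ((Fintype.card (L ≃ₐ[K] L) : ℕ) : ℂ) ≠ 0 :=
    Nat.cast_ne_zero.mpr Fintype.card_ne_zero
  have hN : ((p ^ n : ℕ) : ℂ) ≠ 0 := Nat.cast_ne_zero.mpr (pow_ne_zero _ hp.out.pos.ne')
  have hp0 : (p : ℂ) ≠ 0 := Nat.cast_ne_zero.mpr hp.out.pos.ne'
  rw [Nat.cast_mul, mul_inv]
  field_simp
end

section
/- For all units c, d ∈ (ℤ/p^nℤ)^×, the partial Kloosterman-type sum satisfies |(1/p^n)·Σ_{a ∈ (ℤ/p^nℤ)^×, a ≡ c mod p^{n₀}} e((a + a^{−1}d)/p^n)| ≤ p^{2 − n/2}, where a^{−1} denotes the inverse of a in (ℤ/p^nℤ)^×. -/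
open Complex

lemma e_add (x y : ℚ) : e (x + y) = e x * e y := by
  rw [e, e, e, ← Complex.exp_add]
  push_cast
  ring_nf

lemma e_int (k : ℤ) : e k = 1 := by
  rw [e, show 2 * (Real.pi:ℂ) * Complex.I * (k:ℚ) = (k:ℂ) * (2*Real.pi*Complex.I) by push_cast; ring]
  exact Complex.exp_int_mul_two_pi_mul_I k

lemma abs_e (x : ℚ) : ‖e x‖ = 1 := by
  rw [e, show 2 * (Real.pi:ℂ) * Complex.I * (x:ℚ) = ((2*Real.pi*(x:ℝ) : ℝ):ℂ) * Complex.I by push_cast; ring]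
  exact Complex.norm_exp_ofReal_mul_I _

noncomputable def psi (N : ℕ) (x : ZMod N) : ℂ := e ((x.val : ℚ) / (N : ℚ))

lemma psi_add (N : ℕ) [NeZero N] (x y : ZMod N) : psi N (x + y) = psi N x * psi N y := by
  rw [psi, psi, psi, ← e_add]
  have h1 : (x + y).val = (x.val + y.val) % N := ZMod.val_add x y
  have h2 : (x.val + y.val) % N + N * ((x.val + y.val) / N) = x.val + y.val :=
    Nat.mod_add_div _ _
  have hN : (N:ℚ) ≠ 0 := by exact_mod_cast (NeZero.ne N)
  obtain ⟨A, hA⟩ : ∃ A : ℕ, x.val = A := ⟨_, rfl⟩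
  obtain ⟨B, hB⟩ : ∃ B : ℕ, y.val = B := ⟨_, rfl⟩
  obtain ⟨C, hC⟩ : ∃ C : ℕ, (x+y).val = C := ⟨_, rfl⟩
  rw [hC] at h1 ⊢
  rw [hA, hB] at h1 h2 ⊢
  obtain ⟨K, hK⟩ : ∃ K : ℕ, (A + B) / N = K := ⟨_, rfl⟩
  rw [hK] at h2
  have h3 : (C : ℚ) + N * K = (A : ℚ) + (B : ℚ) := by
    have h2q := congrArg (Nat.cast : ℕ → ℚ) h2
    rw [h1]
    exact_mod_cast h2q
  have h4 : (C : ℚ) / N = (A:ℚ)/N + (B:ℚ)/N + ((-(K:ℤ) : ℤ) : ℚ) := by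
    push_cast
    field_simp
    linarith [h3]
  rw [h4, e_add, e_int, mul_one]

lemma psi_zero (N : ℕ) [NeZero N] : psi N 0 = 1 := by
  rw [psi]
  simp [ZMod.val_zero, e]

lemma psi_pow (N : ℕ) [NeZero N] (x : ZMod N) (u : ℕ) :
    psi N x ^ u = psi N ((u : ZMod N) * x) := by
  induction u with
  | zero => simp [psi_zero]
  | succ k ih =>
    rw [pow_succ, ih, ← psi_add]
    congr 1
    push_cast
    ring

lemma abs_psi (N : ℕ) (x : ZMod N) : ‖psi N x‖ = 1 := abs_e _

lemma psi_eq_one_iff (N : ℕ) [NeZero N] (x : ZMod N) : psi N x = 1 ↔ x = 0 := by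
  constructor
  · intro h
    rw [psi, e] at h
    obtain ⟨k, hk⟩ := Complex.exp_eq_one_iff.mp h
    have hne : (2*(Real.pi:ℂ)*Complex.I) ≠ 0 := by
      simp [Real.pi_ne_zero, Complex.I_ne_zero]
    have h2 : (((x.val:ℚ)/(N:ℚ) : ℚ) : ℂ) = (k:ℂ) := by
      apply mul_left_cancel₀ hne
      rw [hk]; ring
    have h3 : ((x.val:ℚ)/(N:ℚ)) = (k:ℚ) := by exact_mod_cast h2
    have hN : (N:ℚ) ≠ 0 := by exact_mod_cast (NeZero.ne N)
    obtain ⟨A, hA⟩ : ∃ A : ℕ, x.val = A := ⟨_, rfl⟩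
    rw [hA] at h3
    have h4 : (A:ℚ) = (N:ℚ) * k := by field_simp at h3; linarith [h3]
    have h5 : (A:ℤ) = (N:ℤ) * k := by exact_mod_cast h4
    have h6 : (N:ℤ) ∣ (A:ℤ) := ⟨k, h5⟩
    have h7 : (N:ℕ) ∣ A := by exact_mod_cast h6
    have h8 := ZMod.val_lt x
    rw [hA] at h8
    have : A = 0 := Nat.eq_zero_of_dvd_of_lt h7 h8
    exact (ZMod.val_eq_zero x).mp (hA.trans this)
  · intro h; rw [h, psi_zero]


section helpers

variable {p : ℕ}

/-- Sum over a fiber of the reduction map `ZMod p^k → ZMod p^l`. -/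
lemma fiber_sum {M : Type*} [AddCommMonoid M] (hp : 1 < p) {k l : ℕ} (h : l ≤ k)
    [NeZero (p^l)] [NeZero (p^k)]
    (y : ZMod (p^l)) (f : ZMod (p^k) → M) :
    ∑ x ∈ Finset.univ.filter
        (fun x : ZMod (p^k) => ZMod.castHom (pow_dvd_pow p h) (ZMod (p^l)) x = y), f x
    = ∑ u ∈ Finset.range (p^(k-l)),
        f (((y.val : ℕ) : ZMod (p^k)) + (p : ZMod (p^k))^l * (u : ZMod (p^k))) := by
  have hpl : 0 < p^l := pow_pos (by omega) _
  have hcast : ∀ z : ZMod (p^k),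
      ZMod.castHom (pow_dvd_pow p h) (ZMod (p^l)) z = ((z.val : ℕ) : ZMod (p^l)) := by
    intro z
    conv_lhs => rw [show z = ((z.val : ℕ) : ZMod (p^k)) by rw [ZMod.natCast_val, ZMod.cast_id]]
    rw [map_natCast]
  have hy : ((y.val : ℕ) : ZMod (p^l)) = y := by rw [ZMod.natCast_val, ZMod.cast_id]
  have hzero : ∀ z : ZMod (p^k),
      ZMod.castHom (pow_dvd_pow p h) (ZMod (p^l)) z = 0 ↔ p^l ∣ z.val := by
    intro z
    rw [hcast, ZMod.natCast_eq_zero_iff]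
  have ha₀y : ZMod.castHom (pow_dvd_pow p h) (ZMod (p^l)) (((y.val : ℕ) : ZMod (p^k))) = y := by
    rw [map_natCast, hy]
  have hji : ∀ x : ZMod (p^k), ZMod.castHom (pow_dvd_pow p h) (ZMod (p^l)) x = y →
      ((y.val : ℕ) : ZMod (p^k)) + (p : ZMod (p^k))^l
        * (((x - ((y.val : ℕ) : ZMod (p^k))).val / p^l : ℕ) : ZMod (p^k)) = x := by
    intro x hx
    have hdvd : p^l ∣ (x - ((y.val : ℕ) : ZMod (p^k))).val := by
      rw [← hzero, map_sub, hx, ha₀y, sub_self]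
    have h5 : (p : ZMod (p^k))^l
        * (((x - ((y.val : ℕ) : ZMod (p^k))).val / p^l : ℕ) : ZMod (p^k))
        = (((x - ((y.val : ℕ) : ZMod (p^k))).val : ℕ) : ZMod (p^k)) := by
      rw [← Nat.cast_pow, ← Nat.cast_mul, Nat.mul_div_cancel' hdvd]
    have h6 : (((x - ((y.val : ℕ) : ZMod (p^k))).val : ℕ) : ZMod (p^k))
        = x - ((y.val : ℕ) : ZMod (p^k)) := by rw [ZMod.natCast_val, ZMod.cast_id]
    rw [h5, h6, add_sub_cancel]
  refine Finset.sum_nbij' (i := fun x => (x - ((y.val : ℕ) : ZMod (p^k))).val / p^l)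
    (j := fun u => ((y.val : ℕ) : ZMod (p^k)) + (p : ZMod (p^k))^l * (u : ZMod (p^k)))
    ?_ ?_ ?_ ?_ ?_
  · -- maps to range
    intro x hx
    simp only [Finset.mem_filter, Finset.mem_univ, true_and] at hx
    have hdvd : p^l ∣ (x - ((y.val : ℕ) : ZMod (p^k))).val := by
      rw [← hzero, map_sub, hx, ha₀y, sub_self]
    have hlt : (x - ((y.val : ℕ) : ZMod (p^k))).val < p^k := ZMod.val_lt _
    rw [Finset.mem_range, Nat.div_lt_iff_lt_mul hpl]
    calc (x - ((y.val : ℕ) : ZMod (p^k))).val < p^k := hlt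
    _ = p^(k-l) * p^l := by rw [← pow_add]; congr 1; omega
  · -- j maps to filter
    intro u hu
    simp only [Finset.mem_filter, Finset.mem_univ, true_and]
    rw [map_add, map_mul, map_pow, map_natCast, map_natCast, hy]
    have : ((p : ZMod (p^l)))^l = 0 := by
      rw [← Nat.cast_pow, ZMod.natCast_self]
    rw [this, zero_mul, add_zero]
  · -- j ∘ i = id
    intro x hx
    simp only [Finset.mem_filter, Finset.mem_univ, true_and] at hx
    exact hji x hx
  · -- i ∘ j = id
    intro u hu
    rw [Finset.mem_range] at hu
    have h1 : ((y.val : ℕ) : ZMod (p^k)) + (p : ZMod (p^k))^l * (u : ZMod (p^k))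
        - ((y.val : ℕ) : ZMod (p^k)) = (((p^l * u : ℕ) : ZMod (p^k))) := by
      push_cast; ring
    rw [h1, ZMod.val_natCast]
    have hlt : p^l * u < p^k := by
      calc p^l * u < p^l * p^(k-l) := by
            exact mul_lt_mul_of_pos_left hu hpl
      _ = p^k := by rw [← pow_add]; congr 1; omega
    rw [Nat.mod_eq_of_lt hlt, Nat.mul_div_cancel_left _ hpl]
  · intro x hx
    simp only [Finset.mem_filter, Finset.mem_univ, true_and] at hx
    rw [hji x hx]

lemma fiber_card (hp : 1 < p) {k l : ℕ} (h : l ≤ k) [NeZero (p^l)] [NeZero (p^k)]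
    (y : ZMod (p^l)) :
    (Finset.univ.filter
      (fun x : ZMod (p^k) => ZMod.castHom (pow_dvd_pow p h) (ZMod (p^l)) x = y)).card
    = p^(k-l) := by
  have := fiber_sum (M := ℕ) hp h y (fun _ => 1)
  simpa using this

lemma isUnit_zmod_iff (hp : p.Prime) {k : ℕ} (hk : 0 < k) (x : ZMod (p^k)) :
    IsUnit x ↔ ¬ p ∣ x.val := by
  haveI : NeZero (p^k) := ⟨pow_ne_zero _ hp.pos.ne'⟩
  have h1 := ZMod.isUnit_iff_coprime x.val (p^k)
  rw [ZMod.natCast_val, ZMod.cast_id] at h1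
  rw [h1, Nat.coprime_pow_right_iff hk, Nat.coprime_comm]
  exact hp.coprime_iff_not_dvd

lemma isUnit_cast_iff (hp : p.Prime) {k l : ℕ} (hl : 0 < l) (h : l ≤ k) (x : ZMod (p^k)) :
    IsUnit x ↔ IsUnit (ZMod.castHom (pow_dvd_pow p h) (ZMod (p^l)) x) := by
  haveI : NeZero (p^l) := ⟨pow_ne_zero _ hp.pos.ne'⟩
  haveI : NeZero (p^k) := ⟨pow_ne_zero _ hp.pos.ne'⟩
  rw [isUnit_zmod_iff hp (by omega), isUnit_zmod_iff hp hl]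
  have hval : (ZMod.castHom (pow_dvd_pow p h) (ZMod (p^l)) x).val = x.val % p^l := by
    conv_lhs => rw [show x = ((x.val : ℕ) : ZMod (p^k)) by rw [ZMod.natCast_val, ZMod.cast_id]]
    rw [map_natCast, ZMod.val_natCast]
  rw [hval]
  have hpd : p ∣ p^l := dvd_pow_self p hl.ne'
  constructor
  · intro hnd hd; exact hnd ((Nat.dvd_mod_iff hpd).mp hd)
  · intro hnd hd; exact hnd ((Nat.dvd_mod_iff hpd).mpr hd)

lemma zmod_inv_eq {M : ℕ} {x y : ZMod M} (hx : IsUnit x) (h : x * y = 1) : x⁻¹ = y := by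
  have h2 := ZMod.inv_mul_of_unit x hx
  calc x⁻¹ = x⁻¹ * (x * y) := by rw [h, mul_one]
  _ = (x⁻¹ * x) * y := by ring
  _ = y := by rw [h2, one_mul]

end helpers


section sqrt
variable {p : ℕ}

lemma isUnit_zmod_iff' (hp : p.Prime) {k : ℕ} (hk : 0 < k) (x : ZMod (p^k)) :
    IsUnit x ↔ ¬ p ∣ x.val := by
  haveI : NeZero (p^k) := ⟨pow_ne_zero _ hp.pos.ne'⟩
  have h1 := ZMod.isUnit_iff_coprime x.val (p^k)
  rw [ZMod.natCast_val, ZMod.cast_id] at h1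
  rw [h1, Nat.coprime_pow_right_iff hk, Nat.coprime_comm]
  exact hp.coprime_iff_not_dvd

/-- number of square roots of a unit mod p^m, p odd prime, is at most 2 -/
lemma sqrt_card (hp : p.Prime) (hodd : Odd p) (m : ℕ) [NeZero (p^m)] (t : ZMod (p^m))
    (ht : IsUnit t) :
    (Finset.univ.filter (fun y : ZMod (p^m) => y * y = t)).card ≤ 2 := by
  rcases Nat.eq_zero_or_pos m with hm | hm
  · subst hm
    calc (Finset.univ.filter (fun y : ZMod (p^0) => y * y = t)).card
        ≤ (Finset.univ : Finset (ZMod (p^0))).card := Finset.card_filter_le _ _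
    _ ≤ 2 := by rw [Finset.card_univ, ZMod.card]; norm_num
  rcases Finset.eq_empty_or_nonempty
      (Finset.univ.filter (fun y : ZMod (p^m) => y * y = t)) with he | hne
  · rw [he]; simp
  obtain ⟨y₀, hy₀⟩ := hne
  simp only [Finset.mem_filter, Finset.mem_univ, true_and] at hy₀
  have hpne : p ≠ 2 := by
    rcases hodd with ⟨j, hj⟩
    omega
  have cancel : ∀ a b : ZMod (p^m), IsUnit a → a * b = 0 → b = 0 := by
    intro a b ha hab
    obtain ⟨u, hu⟩ := ha
    calc b = ((u⁻¹ : (ZMod (p^m))ˣ) : ZMod (p^m)) * (a * b) := by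
          rw [← hu, ← mul_assoc, Units.inv_mul, one_mul]
    _ = 0 := by rw [hab, mul_zero]
  have hy₀u : IsUnit y₀ := isUnit_of_mul_isUnit_left (hy₀ ▸ ht)
  have h2u : IsUnit (2 : ZMod (p^m)) := by
    rw [show (2 : ZMod (p^m)) = ((2:ℕ) : ZMod (p^m)) by push_cast; ring,
      ZMod.isUnit_iff_coprime, Nat.coprime_pow_right_iff hm, Nat.coprime_comm,
      hp.coprime_iff_not_dvd]
    intro hd
    have := Nat.le_of_dvd (by norm_num) hd
    have := hp.two_le
    omega
  apply le_trans (Finset.card_le_card (t := {y₀, -y₀}) ?_)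
  · exact le_trans (Finset.card_insert_le _ _) (by simp)
  intro y hy
  simp only [Finset.mem_filter, Finset.mem_univ, true_and] at hy
  have hyu : IsUnit y := isUnit_of_mul_isUnit_left (hy ▸ ht)
  have h2yu : IsUnit (2 * y) := h2u.mul hyu
  have hfac : (y - y₀) * (y + y₀) = 0 := by
    calc (y - y₀) * (y + y₀) = y * y - y₀ * y₀ := by ring
    _ = 0 := by rw [hy, hy₀, sub_self]
  have hvm : p^m ∣ (y - y₀).val * (y + y₀).val := by
    have h1 : (0 : ZMod (p^m)).val = ((y - y₀).val * (y + y₀).val) % (p^m) := by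
      rw [← ZMod.val_mul, hfac]
    rw [ZMod.val_zero] at h1
    exact Nat.dvd_of_mod_eq_zero h1.symm
  have hv : p ∣ (y - y₀).val * (y + y₀).val :=
    dvd_trans (dvd_pow_self p hm.ne') hvm
  have hnotboth : ¬ (p ∣ (y - y₀).val ∧ p ∣ (y + y₀).val) := by
    rintro ⟨h1, h2⟩
    have hsum : (2 * y).val = ((y - y₀).val + (y + y₀).val) % (p^m) := by
      rw [← ZMod.val_add]; congr 1; ring
    have hpd : p ∣ (2*y).val := by
      rw [hsum, Nat.dvd_mod_iff (dvd_pow_self p hm.ne')]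
      exact Nat.dvd_add h1 h2
    exact ((isUnit_zmod_iff' hp hm _).mp h2yu) hpd
  simp only [Finset.mem_insert, Finset.mem_singleton]
  rcases (Nat.Prime.dvd_mul hp).mp hv with h1 | h1
  · -- p ∣ val (y - y₀): then y + y₀ is a unit, so y - y₀ = 0
    have h2 : ¬ p ∣ (y + y₀).val := fun h2 => hnotboth ⟨h1, h2⟩
    have hu : IsUnit (y + y₀) := (isUnit_zmod_iff' hp hm _).mpr h2
    have : y - y₀ = 0 := cancel _ _ hu (by rw [mul_comm] at hfac; exact hfac)
    left; linear_combination this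
  · have h2 : ¬ p ∣ (y - y₀).val := fun h2 => hnotboth ⟨h2, h1⟩
    have hu : IsUnit (y - y₀) := (isUnit_zmod_iff' hp hm _).mpr h2
    have : y + y₀ = 0 := cancel _ _ hu hfac
    right; linear_combination this

end sqrt
/-- the paper's Lemma 3.5: for an odd prime `p` and `⌈n/2⌉ ≥ n₀ ≥ 1`, and all
units `c, d` of `ℤ/p^nℤ`,
`|(1/p^n)·Σ_{a ≡ c (p^{n₀})} e((a + a^{−1}d)/p^n)| ≤ p^{2 − n/2}`. -/
theorem stmt_4 (p n n₀ : ℕ) [hp : Fact p.Prime] (hodd : Odd p)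
    (hn₀ : 0 < n₀) (hn : n₀ ≤ (n + 1) / 2)
    (c d : (ZMod (p ^ n))ˣ) :
    ‖((p : ℂ) ^ n)⁻¹ *
      ∑ a ∈ Finset.univ.filter (fun a : (ZMod (p ^ n))ˣ =>
          ZMod.castHom (pow_dvd_pow p (by omega : n₀ ≤ n)) (ZMod (p ^ n₀)) (a : ZMod (p ^ n)) =
          ZMod.castHom (pow_dvd_pow p (by omega : n₀ ≤ n)) (ZMod (p ^ n₀)) (c : ZMod (p ^ n))),
        e ((((a : ZMod (p ^ n)) + ((a⁻¹ * d : (ZMod (p ^ n))ˣ) : ZMod (p ^ n))).val : ℚ) /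
          (p ^ n : ℚ))‖
    ≤ (p : ℝ) ^ ((2 : ℝ) - (n : ℝ) / 2) := by
  classical
  have hpp : p.Prime := hp.1
  have hp1 : 1 < p := hpp.one_lt
  have hp3 : 3 ≤ p := by
    rcases hodd with ⟨j, hj⟩
    have := hpp.two_le
    omega
  have hn1 : 1 ≤ n := by omega
  obtain ⟨n₁, hn₁def⟩ : ∃ n₁ : ℕ, n₁ = (n+1)/2 := ⟨_, rfl⟩
  have hn₁n : n₁ ≤ n := by omega
  have hn₀n₁ : n₀ ≤ n₁ := by omega
  have hn₁pos : 0 < n₁ := by omega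
  have hmn₁ : n - n₁ ≤ n₁ := by omega
  have h2n₁ : n ≤ 2 * n₁ := by omega
  have hn₀n : n₀ ≤ n := by omega
  haveI : NeZero (p^n) := ⟨pow_ne_zero _ hpp.pos.ne'⟩
  haveI : NeZero (p^n₁) := ⟨pow_ne_zero _ hpp.pos.ne'⟩
  haveI : NeZero (p^(n-n₁)) := ⟨pow_ne_zero _ hpp.pos.ne'⟩
  haveI : NeZero (p^n₀) := ⟨pow_ne_zero _ hpp.pos.ne'⟩
  -- names for the reduction maps
  -- π₀ : ZMod (p^n) → ZMod (p^n₀), π₁ : → ZMod (p^n₁), πm : → ZMod (p^(n-n₁)),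
  -- π₀' : ZMod (p^n₁) → ZMod (p^n₀), πm' : ZMod (p^n₁) → ZMod (p^(n-n₁))
  -- the set of ring elements we sum over
  set T : Finset (ZMod (p^n)) := Finset.univ.filter (fun x : ZMod (p^n) =>
      IsUnit x ∧ ZMod.castHom (pow_dvd_pow p hn₀n) (ZMod (p^n₀)) x =
        ZMod.castHom (pow_dvd_pow p hn₀n) (ZMod (p^n₀)) (c : ZMod (p^n))) with hT
  -- Step B : rewrite the sum over units as a sum over T
  have hsum_eq :
      ∑ a ∈ Finset.univ.filter (fun a : (ZMod (p ^ n))ˣ =>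
          ZMod.castHom (pow_dvd_pow p hn₀n) (ZMod (p ^ n₀)) (a : ZMod (p ^ n)) =
          ZMod.castHom (pow_dvd_pow p hn₀n) (ZMod (p ^ n₀)) (c : ZMod (p ^ n))),
        e ((((a : ZMod (p ^ n)) + ((a⁻¹ * d : (ZMod (p ^ n))ˣ) : ZMod (p ^ n))).val : ℚ) /
          (p ^ n : ℚ))
      = ∑ x ∈ T, psi (p^n) (x + x⁻¹ * (d : ZMod (p^n))) := by
    refine Finset.sum_bij (i := fun a _ => (a : ZMod (p^n))) ?_ ?_ ?_ ?_
    · intro a ha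
      simp only [Finset.mem_filter, Finset.mem_univ, true_and] at ha ⊢
      rw [hT, Finset.mem_filter]
      exact ⟨Finset.mem_univ _, a.isUnit, ha⟩
    · intro a₁ _ a₂ _ h
      exact Units.ext h
    · intro x hx
      rw [hT, Finset.mem_filter] at hx
      obtain ⟨-, hu, hx⟩ := hx
      refine ⟨hu.unit, ?_, hu.unit_spec⟩
      simp only [Finset.mem_filter, Finset.mem_univ, true_and]
      rw [hu.unit_spec]
      exact hx
    · intro a ha
      have h1 : ((a⁻¹ * d : (ZMod (p^n))ˣ) : ZMod (p^n)) =
          (a : ZMod (p^n))⁻¹ * (d : ZMod (p^n)) := by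
        rw [Units.val_mul, ZMod.inv_coe_unit]
      rw [h1, psi]
      norm_cast
  -- Step C : fiberwise decomposition
  have hfib : ∑ x ∈ T, psi (p^n) (x + x⁻¹ * (d : ZMod (p^n)))
      = ∑ b : ZMod (p^n₁), ∑ x ∈ T.filter
          (fun x => ZMod.castHom (pow_dvd_pow p hn₁n) (ZMod (p^n₁)) x = b),
          psi (p^n) (x + x⁻¹ * (d : ZMod (p^n))) :=
    (Finset.sum_fiberwise T _ _).symm
  -- the bad set
  set Bad : Finset (ZMod (p^n₁)) := Finset.univ.filter (fun b : ZMod (p^n₁) =>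
      ZMod.castHom (pow_dvd_pow p hmn₁) (ZMod (p^(n-n₁))) b *
      ZMod.castHom (pow_dvd_pow p hmn₁) (ZMod (p^(n-n₁))) b =
      ZMod.castHom (pow_dvd_pow p (Nat.sub_le n n₁)) (ZMod (p^(n-n₁))) (d : ZMod (p^n)))
    with hBad
  -- generic facts
  have hcastval : ∀ x : ZMod (p^n), x = ((x.val : ℕ) : ZMod (p^n)) := by
    intro x; rw [ZMod.natCast_val, ZMod.cast_id]
  have hcastval₁ : ∀ b : ZMod (p^n₁), b = ((b.val : ℕ) : ZMod (p^n₁)) := by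
    intro b; rw [ZMod.natCast_val, ZMod.cast_id]
  -- composition of reduction maps
  have hcomp : ∀ x : ZMod (p^n),
      ZMod.castHom (pow_dvd_pow p hn₀n) (ZMod (p^n₀)) x =
      ZMod.castHom (pow_dvd_pow p hn₀n₁) (ZMod (p^n₀))
        (ZMod.castHom (pow_dvd_pow p hn₁n) (ZMod (p^n₁)) x) := by
    intro x
    conv_lhs => rw [hcastval x]
    conv_rhs => rw [hcastval x]
    rw [map_natCast, map_natCast, map_natCast]
  -- annihilator of p^n₁ in ZMod (p^n)
  have hann : ∀ x : ZMod (p^n), (p : ZMod (p^n))^n₁ * x = 0 ↔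
      ZMod.castHom (pow_dvd_pow p (Nat.sub_le n n₁)) (ZMod (p^(n-n₁))) x = 0 := by
    intro x
    conv_lhs => rw [hcastval x]
    conv_rhs => rw [hcastval x]
    rw [map_natCast, ← Nat.cast_pow, ← Nat.cast_mul,
      ZMod.natCast_eq_zero_iff, ZMod.natCast_eq_zero_iff]
    constructor
    · intro h
      have h2 : p^n₁ * p^(n-n₁) ∣ p^n₁ * x.val := by
        rw [← pow_add, show n₁ + (n - n₁) = n by omega]; exact h
      exact (mul_dvd_mul_iff_left (a := p^n₁) (pow_ne_zero _ hpp.pos.ne')).mp h2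
    · intro h
      have h2 : p^n₁ * p^(n-n₁) ∣ p^n₁ * x.val := mul_dvd_mul_left _ h
      rw [← pow_add, show n₁ + (n - n₁) = n by omega] at h2
      exact h2
  -- the key vanishing statement
  have key : ∀ b : ZMod (p^n₁), b ∉ Bad →
      ∑ x ∈ T.filter (fun x => ZMod.castHom (pow_dvd_pow p hn₁n) (ZMod (p^n₁)) x = b),
        psi (p^n) (x + x⁻¹ * (d : ZMod (p^n))) = 0 := by
    intro b hb
    by_cases hcond : ZMod.castHom (pow_dvd_pow p hn₀n₁) (ZMod (p^n₀)) b =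
        ZMod.castHom (pow_dvd_pow p hn₀n) (ZMod (p^n₀)) (c : ZMod (p^n))
    swap
    · -- empty fiber
      rw [Finset.filter_false_of_mem, Finset.sum_empty]
      intro x hx
      rw [hT, Finset.mem_filter] at hx
      intro hπ
      exact hcond (by rw [← hπ, ← hcomp, hx.2.2])
    -- b is a unit
    have hubc : IsUnit (ZMod.castHom (pow_dvd_pow p hn₀n) (ZMod (p^n₀)) (c : ZMod (p^n))) :=
      c.isUnit.map _
    have hub : IsUnit b := by
      rw [isUnit_cast_iff hpp hn₀ hn₀n₁]
      rw [hcond]; exact hubc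
    -- the fiber is a full fiber
    have hTb : T.filter (fun x => ZMod.castHom (pow_dvd_pow p hn₁n) (ZMod (p^n₁)) x = b)
        = Finset.univ.filter
          (fun x : ZMod (p^n) => ZMod.castHom (pow_dvd_pow p hn₁n) (ZMod (p^n₁)) x = b) := by
      ext x
      rw [hT, Finset.filter_filter, Finset.mem_filter, Finset.mem_filter]
      constructor
      · rintro ⟨h1, -, h3⟩; exact ⟨h1, h3⟩
      · rintro ⟨h1, h2⟩
        refine ⟨h1, ⟨?_, ?_⟩, h2⟩
        · rw [isUnit_cast_iff hpp hn₁pos hn₁n, h2]; exact hub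
        · rw [hcomp, h2, hcond]
    rw [hTb, fiber_sum hp1 hn₁n b _]
    -- notation for the lift and related elements
    have ha₀b : ZMod.castHom (pow_dvd_pow p hn₁n) (ZMod (p^n₁)) ((b.val : ℕ) : ZMod (p^n))
        = b := by rw [map_natCast, ← hcastval₁]
    set a₀ : ZMod (p^n) := ((b.val : ℕ) : ZMod (p^n)) with ha₀def
    set P : ZMod (p^n) := (p : ZMod (p^n))^n₁ with hPdef
    have ha₀u : IsUnit a₀ := by
      rw [isUnit_cast_iff hpp hn₁pos hn₁n, ha₀b]; exact hub
    have hPP : P * P = 0 := by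
      rw [hPdef, ← pow_add,
        show n₁ + n₁ = n + (n₁ + n₁ - n) by omega, pow_add,
        ← Nat.cast_pow p n, ZMod.natCast_self, zero_mul]
    have ha₀i : a₀ * a₀⁻¹ = 1 := ZMod.mul_inv_of_unit _ ha₀u
    have hπPu : ∀ u : ℕ, ZMod.castHom (pow_dvd_pow p hn₁n) (ZMod (p^n₁))
        (a₀ + P * (u : ZMod (p^n))) = b := by
      intro u
      rw [map_add, map_mul, map_pow, map_natCast, map_natCast, map_natCast, ← hcastval₁,
        ← Nat.cast_pow, ZMod.natCast_self, zero_mul, add_zero]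
    have hinv : ∀ u : ℕ, (a₀ + P * (u : ZMod (p^n)))⁻¹
        = a₀⁻¹ - a₀⁻¹ * a₀⁻¹ * P * (u : ZMod (p^n)) := by
      intro u
      apply zmod_inv_eq
      · rw [isUnit_cast_iff hpp hn₁pos hn₁n, hπPu u]; exact hub
      · linear_combination (1 - a₀⁻¹*P*(u : ZMod (p^n))) * ha₀i
          - a₀⁻¹*a₀⁻¹*(u : ZMod (p^n))*(u : ZMod (p^n)) * hPP
    -- the linear phase
    set W : ZMod (p^n) := P * (1 - (d : ZMod (p^n)) * a₀⁻¹ * a₀⁻¹) with hWdef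
    have hFval : ∀ u : ℕ, psi (p^n) ((a₀ + P * (u : ZMod (p^n)))
          + (a₀ + P * (u : ZMod (p^n)))⁻¹ * (d : ZMod (p^n)))
        = psi (p^n) (a₀ + a₀⁻¹ * (d : ZMod (p^n))) * (psi (p^n) W)^u := by
      intro u
      rw [hinv u, psi_pow, ← psi_add]
      congr 1
      rw [hWdef]
      ring
    rw [Finset.sum_congr rfl (fun u hu => hFval u), ← Finset.mul_sum]
    -- W is nonzero since b ∉ Bad
    have hWne : W ≠ 0 := by
      intro hW0
      apply hb
      rw [hBad, Finset.mem_filter]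
      refine ⟨Finset.mem_univ _, ?_⟩
      have h1 : (1 : ZMod (p^(n-n₁)))
          - ZMod.castHom (pow_dvd_pow p (Nat.sub_le n n₁)) (ZMod (p^(n-n₁))) (d : ZMod (p^n))
          * ZMod.castHom (pow_dvd_pow p (Nat.sub_le n n₁)) (ZMod (p^(n-n₁))) a₀⁻¹
          * ZMod.castHom (pow_dvd_pow p (Nat.sub_le n n₁)) (ZMod (p^(n-n₁))) a₀⁻¹ = 0 := by
        have h2 := (hann _).mp (hWdef ▸ hW0)
        rw [map_sub, map_one, map_mul, map_mul] at h2
        exact h2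
      have hXY : ZMod.castHom (pow_dvd_pow p (Nat.sub_le n n₁)) (ZMod (p^(n-n₁))) a₀
          * ZMod.castHom (pow_dvd_pow p (Nat.sub_le n n₁)) (ZMod (p^(n-n₁))) a₀⁻¹ = 1 := by
        rw [← map_mul, ha₀i, map_one]
      have hπa₀ : ZMod.castHom (pow_dvd_pow p (Nat.sub_le n n₁)) (ZMod (p^(n-n₁))) a₀
          = ZMod.castHom (pow_dvd_pow p hmn₁) (ZMod (p^(n-n₁))) b := by
        conv_rhs => rw [hcastval₁ b]
        rw [ha₀def, map_natCast, map_natCast]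
      rw [← hπa₀]
      linear_combination (ZMod.castHom (pow_dvd_pow p (Nat.sub_le n n₁)) (ZMod (p^(n-n₁))) a₀
          * ZMod.castHom (pow_dvd_pow p (Nat.sub_le n n₁)) (ZMod (p^(n-n₁))) a₀) * h1
        + (ZMod.castHom (pow_dvd_pow p (Nat.sub_le n n₁)) (ZMod (p^(n-n₁))) (d : ZMod (p^n)))
          * (ZMod.castHom (pow_dvd_pow p (Nat.sub_le n n₁)) (ZMod (p^(n-n₁))) a₀
            * ZMod.castHom (pow_dvd_pow p (Nat.sub_le n n₁)) (ZMod (p^(n-n₁))) a₀⁻¹ + 1) * hXY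
    -- geometric sum vanishes
    have hz1 : psi (p^n) W ≠ 1 := fun h => hWne ((psi_eq_one_iff _ _).mp h)
    have hzM : (psi (p^n) W)^(p^(n-n₁)) = 1 := by
      rw [psi_pow]
      have : ((p^(n-n₁) : ℕ) : ZMod (p^n)) * W = 0 := by
        rw [hWdef, hPdef, ← mul_assoc, Nat.cast_pow, ← pow_add,
          show n - n₁ + n₁ = n by omega, ← Nat.cast_pow p n, ZMod.natCast_self, zero_mul]
      rw [this, psi_zero]
    have hgeom : ∑ u ∈ Finset.range (p^(n-n₁)), (psi (p^n) W)^u = 0 := by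
      have hgm := geom_sum_mul (psi (p^n) W) (p^(n-n₁))
      rw [hzM, sub_self] at hgm
      rcases mul_eq_zero.mp hgm with h | h
      · exact h
      · exact absurd (by linear_combination h) hz1
    rw [hgeom, mul_zero]
  -- bound on each fiber sum
  have hbound : ∀ b : ZMod (p^n₁),
      ‖∑ x ∈ T.filter
        (fun x => ZMod.castHom (pow_dvd_pow p hn₁n) (ZMod (p^n₁)) x = b),
        psi (p^n) (x + x⁻¹ * (d : ZMod (p^n)))‖ ≤ ((p^(n-n₁) : ℕ) : ℝ) := by
    intro b
    refine le_trans (norm_sum_le _ _) ?_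
    have h1 : ∀ x ∈ T.filter (fun x => ZMod.castHom (pow_dvd_pow p hn₁n) (ZMod (p^n₁)) x = b),
        ‖psi (p^n) (x + x⁻¹ * (d : ZMod (p^n)))‖ = (1:ℝ) := fun x _ => abs_psi _ _
    rw [Finset.sum_congr rfl h1, Finset.sum_const, nsmul_eq_mul, mul_one]
    have h2 : (T.filter (fun x => ZMod.castHom (pow_dvd_pow p hn₁n) (ZMod (p^n₁)) x = b)).card
        ≤ p^(n-n₁) := by
      refine le_trans (Finset.card_le_card
        (Finset.filter_subset_filter _ (Finset.subset_univ T))) ?_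
      rw [fiber_card hp1 hn₁n b]
    exact_mod_cast h2
  -- cardinality of the bad set
  have hBadcard : Bad.card ≤ 2 * p^(n₁ - (n - n₁)) := by
    have hsub : Bad ⊆ (Finset.univ.filter
        (fun y : ZMod (p^(n-n₁)) => y * y =
          ZMod.castHom (pow_dvd_pow p (Nat.sub_le n n₁)) (ZMod (p^(n-n₁)))
            (d : ZMod (p^n)))).biUnion
        (fun y => Finset.univ.filter
          (fun b : ZMod (p^n₁) =>
            ZMod.castHom (pow_dvd_pow p hmn₁) (ZMod (p^(n-n₁))) b = y)) := by
      intro b hb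
      rw [hBad, Finset.mem_filter] at hb
      rw [Finset.mem_biUnion]
      exact ⟨_, Finset.mem_filter.mpr ⟨Finset.mem_univ _, hb.2⟩,
        Finset.mem_filter.mpr ⟨Finset.mem_univ _, rfl⟩⟩
    refine le_trans (Finset.card_le_card hsub) (le_trans Finset.card_biUnion_le ?_)
    rw [Finset.sum_congr rfl (fun y _ => fiber_card hp1 hmn₁ y), Finset.sum_const, smul_eq_mul]
    exact Nat.mul_le_mul_right _
      (sqrt_card hpp hodd (n-n₁) _ (d.isUnit.map _))
  -- assemble everything
  rw [hsum_eq, hfib, ← Finset.sum_subset (Finset.subset_univ Bad) (fun b _ hb => key b hb)]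
  rw [norm_mul, norm_inv, norm_pow, Complex.norm_natCast]
  have hp0 : (0:ℝ) < (p:ℝ) := by positivity
  have hp1R : (1:ℝ) < (p:ℝ) := by exact_mod_cast hp1
  have hSbound : ‖∑ b ∈ Bad, ∑ x ∈ T.filter
        (fun x => ZMod.castHom (pow_dvd_pow p hn₁n) (ZMod (p^n₁)) x = b),
        psi (p^n) (x + x⁻¹ * (d : ZMod (p^n)))‖ ≤ 2 * (p:ℝ)^n₁ := by
    refine le_trans (norm_sum_le _ _) ?_
    refine le_trans (Finset.sum_le_card_nsmul _ _ (((p^(n-n₁):ℕ)):ℝ) (fun b _ => hbound b)) ?_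
    rw [nsmul_eq_mul]
    have hc : (Bad.card : ℝ) ≤ 2 * (p:ℝ)^(n₁-(n-n₁)) := by exact_mod_cast hBadcard
    calc (Bad.card:ℝ) * ((p^(n-n₁):ℕ):ℝ)
        ≤ (2*(p:ℝ)^(n₁-(n-n₁))) * (p:ℝ)^(n-n₁) := by
          rw [show ((p^(n-n₁):ℕ):ℝ) = (p:ℝ)^(n-n₁) by push_cast; ring]
          exact mul_le_mul_of_nonneg_right hc (by positivity)
    _ = 2 * (p:ℝ)^n₁ := by
          rw [mul_assoc, ← pow_add]
          congr 2
          omega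
  calc ((p:ℝ)^n)⁻¹ * ‖∑ b ∈ Bad, ∑ x ∈ T.filter
        (fun x => ZMod.castHom (pow_dvd_pow p hn₁n) (ZMod (p^n₁)) x = b),
        psi (p^n) (x + x⁻¹ * (d : ZMod (p^n)))‖
      ≤ ((p:ℝ)^n)⁻¹ * (2 * (p:ℝ)^n₁) := by
        exact mul_le_mul_of_nonneg_left hSbound (by positivity)
  _ ≤ (p:ℝ)^((2:ℝ) - (n:ℝ)/2) := by
      rw [inv_mul_le_iff₀ (by positivity)]
      have h2 : (2:ℝ) ≤ (p:ℝ)^((3:ℝ)/2) := by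
        calc (2:ℝ) ≤ (p:ℝ) := by exact_mod_cast (by omega : 2 ≤ p)
        _ = (p:ℝ)^(1:ℝ) := (Real.rpow_one _).symm
        _ ≤ (p:ℝ)^((3:ℝ)/2) := Real.rpow_le_rpow_of_exponent_le (le_of_lt hp1R) (by norm_num)
      calc 2 * (p:ℝ)^n₁ ≤ (p:ℝ)^((3:ℝ)/2) * (p:ℝ)^((n₁:ℝ)) := by
            rw [show (p:ℝ)^((n₁:ℝ)) = (p:ℝ)^(n₁:ℕ) from Real.rpow_natCast _ _]
            exact mul_le_mul_of_nonneg_right h2 (by positivity)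
      _ = (p:ℝ)^((3:ℝ)/2 + (n₁:ℝ)) := (Real.rpow_add hp0 _ _).symm
      _ ≤ (p:ℝ)^((n:ℝ) + ((2:ℝ) - (n:ℝ)/2)) := by
            apply Real.rpow_le_rpow_of_exponent_le (le_of_lt hp1R)
            have hcast : (2*(n₁:ℝ)) ≤ (n:ℝ)+1 := by exact_mod_cast (by omega : 2*n₁ ≤ n+1)
            linarith
      _ = (p:ℝ)^n * (p:ℝ)^((2:ℝ) - (n:ℝ)/2) := by
            rw [Real.rpow_add hp0, Real.rpow_natCast]
end
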